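/- Suppose the network (α, μ, P) is non-isolated. If x = α + (x ∧ μ)P and y = α + ε + (y ∧ μ)P for some nonnegative vector ε, and x, y are nonnegative, then y ≥ x entrywise (the traffic equation solution is monotone in the input rate). -/

import Mathlib

open scoped Classical

/-- `i` and `j` communicate under the nonnegative matrix `P`. -/
def Communicates {n : ℕ} (P : Matrix (Fin n) (Fin n) ℝ) (i j : Fin n) : Prop :=
  i = j ∨ ((∃ k ≥ 1, 0 < (P ^ k) i j) ∧ (∃ l ≥ 1, 0 < (P ^ l) j i))

/-- `C` is a communicating class of `P`. -/
def IsCommClass {n : ℕ} (P : Matrix (Fin n) (Fin n) ℝ) (C : Set (Fin n)) : Prop :=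
  ∃ i, C = {j | Communicates P i j}

/-- The class `C` can be filled: exogenous input reaches it directly or
through routing. -/
def CanBeFilled {n : ℕ} (α : Fin n → ℝ) (P : Matrix (Fin n) (Fin n) ℝ)
    (C : Set (Fin n)) : Prop :=
  (∃ i ∈ C, 0 < α i) ∨ (∃ j, 0 < α j ∧ ∃ l ∈ C, ∃ k ≥ 1, 0 < (P ^ k) j l)

/-- The class `C` can be drained: externally (a row sum in `C` is `< 1`) or
internally (positive routing out of `C`). -/
def CanBeDrained {n : ℕ} (P : Matrix (Fin n) (Fin n) ℝ) (C : Set (Fin n)) : Prop :=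
  (∃ i ∈ C, ∑ j, P i j < 1) ∨ (∃ i ∈ C, ∃ j ∉ C, 0 < P i j)

/-- The network `(α, μ, P)` is non-isolated (NI): every communicating class of
`P` can be filled or drained. -/
def NI {n : ℕ} (α : Fin n → ℝ) (P : Matrix (Fin n) (Fin n) ℝ) : Prop :=
  ∀ C, IsCommClass P C → CanBeFilled α P C ∨ CanBeDrained P C

lemma pow_entry_nonneg {n : ℕ} {P : Matrix (Fin n) (Fin n) ℝ}
    (hP : ∀ i j, 0 ≤ P i j) : ∀ k i j, 0 ≤ (P ^ k) i j := by
  intro k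
  induction k with
  | zero => intro i j; simp [Matrix.one_apply]; split <;> norm_num
  | succ k ih =>
    intro i j
    rw [pow_succ, Matrix.mul_apply]
    exact Finset.sum_nonneg fun m _ => mul_nonneg (ih i m) (hP m j)

lemma pow_entry_trans {n : ℕ} {P : Matrix (Fin n) (Fin n) ℝ}
    (hP : ∀ i j, 0 ≤ P i j) {a b : ℕ} {i j l : Fin n}
    (h1 : 0 < (P ^ a) i j) (h2 : 0 < (P ^ b) j l) : 0 < (P ^ (a + b)) i l := by
  rw [pow_add, Matrix.mul_apply]
  have : (P ^ a) i j * (P ^ b) j l ≤ ∑ m, (P ^ a) i m * (P ^ b) m l :=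
    Finset.single_le_sum
      (fun m _ => mul_nonneg (pow_entry_nonneg hP a i m) (pow_entry_nonneg hP b m l))
      (Finset.mem_univ j)
  exact lt_of_lt_of_le (mul_pos h1 h2) this

lemma sum_pos_exists {n : ℕ} {f : Fin n → ℝ} (hf : 0 < ∑ i, f i) :
    ∃ i, 0 < f i := by
  by_contra h
  push_neg at h
  exact absurd (Finset.sum_nonpos fun i _ => h i) (not_le.mpr hf)

lemma pow_succ_exists {n : ℕ} {P : Matrix (Fin n) (Fin n) ℝ}
    (hP : ∀ i j, 0 ≤ P i j) {k : ℕ} {j l : Fin n}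
    (h : 0 < (P ^ (k + 1)) j l) : ∃ m, 0 < P j m ∧ 0 < (P ^ k) m l := by
  rw [pow_succ', Matrix.mul_apply] at h
  obtain ⟨m, hm⟩ := sum_pos_exists h
  have h1 : 0 < P j m := by
    rcases (hP j m).lt_or_eq with h' | h'
    · exact h'
    · rw [← h'] at hm; simp at hm
  have h2 : 0 < (P ^ k) m l := by
    rcases (pow_entry_nonneg hP k m l).lt_or_eq with h' | h'
    · exact h'
    · rw [← h'] at hm; simp at hm
  exact ⟨m, h1, h2⟩

lemma closed_pow {n : ℕ} {P : Matrix (Fin n) (Fin n) ℝ}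
    (hP : ∀ i j, 0 ≤ P i j) {T : Set (Fin n)}
    (hT : ∀ j ∈ T, ∀ l, 0 < P j l → l ∈ T) :
    ∀ k, ∀ j ∈ T, ∀ l, 0 < (P ^ k) j l → l ∈ T := by
  intro k
  induction k with
  | zero =>
    intro j hj l h
    simp [Matrix.one_apply] at h
    rcases eq_or_ne j l with rfl | hne
    · exact hj
    · rw [if_neg hne] at h; exact absurd h (lt_irrefl 0)
  | succ k ih =>
    intro j hj l h
    obtain ⟨m, h1, h2⟩ := pow_succ_exists hP h
    exact ih m (hT j hj m h1) l h2


/-- monotonicity of the traffic equation in the input rate. -/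
theorem traffic_solution_monotone_in_input (n : ℕ)
    (α μ ε x y : Fin n → ℝ) (P : Matrix (Fin n) (Fin n) ℝ)
    (hα : ∀ i, 0 ≤ α i) (hμ : ∀ i, 0 < μ i)
    (hP : ∀ i j, 0 ≤ P i j) (hPsub : ∀ i, ∑ j, P i j ≤ 1)
    (hNI : NI α P)
    (hε : ∀ i, 0 ≤ ε i)
    (hx : ∀ i, 0 ≤ x i) (hy : ∀ i, 0 ≤ y i)
    (hxeq : ∀ i, x i = α i + ∑ j, min (x j) (μ j) * P j i)
    (hyeq : ∀ i, y i = α i + ε i + ∑ j, min (y j) (μ j) * P j i) :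
    ∀ i, x i ≤ y i := by
  by_contra hcon
  push_neg at hcon
  obtain ⟨i0, hi0⟩ := hcon
  classical
  set C : Finset (Fin n) := Finset.univ.filter (fun i => y i < x i) with hCdef
  have hmemC : ∀ i, i ∈ C ↔ y i < x i := by
    intro i; simp [hCdef]
  have hi0C : i0 ∈ C := (hmemC i0).mpr hi0
  set d : Fin n → ℝ := fun i => x i - y i with hddef
  set Δ : Fin n → ℝ := fun j => min (x j) (μ j) - min (y j) (μ j) with hΔdef
  set s : Fin n → ℝ := fun j => ∑ i ∈ C, P j i with hsdef
  have hs_nonneg : ∀ j, 0 ≤ s j := fun j => Finset.sum_nonneg fun i _ => hP j i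
  have hs_le : ∀ j, s j ≤ 1 := by
    intro j
    have : s j ≤ ∑ i, P j i :=
      Finset.sum_le_sum_of_subset_of_nonneg (Finset.subset_univ C)
        (fun i _ _ => hP j i)
    exact this.trans (hPsub j)
  have hd_pos : ∀ j ∈ C, 0 < d j := by
    intro j hj; have := (hmemC j).mp hj; simp [hddef]; linarith
  have hΔ_le_d : ∀ j ∈ C, Δ j ≤ d j := by
    intro j hj
    have hyx := (hmemC j).mp hj
    simp only [hΔdef, hddef]
    rcases le_total (x j) (μ j) with h1 | h1 <;> rcases le_total (y j) (μ j) with h2 | h2 <;>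
      simp [min_eq_left, min_eq_right, h1, h2] <;> linarith
  have hΔ_nonneg : ∀ j ∈ C, 0 ≤ Δ j := by
    intro j hj
    have hyx := (hmemC j).mp hj
    simp only [hΔdef, sub_nonneg]
    exact min_le_min hyx.le le_rfl
  have hΔ_nonpos : ∀ j, j ∉ C → Δ j ≤ 0 := by
    intro j hj
    have hyx : x j ≤ y j := by
      by_contra h; push_neg at h; exact hj ((hmemC j).mpr h)
    simp only [hΔdef, sub_nonpos]
    exact min_le_min hyx le_rfl
  have hdi : ∀ i, d i + ε i = ∑ j, Δ j * P j i := by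
    intro i
    have hsum : ∑ j, Δ j * P j i
        = (∑ j, min (x j) (μ j) * P j i) - ∑ j, min (y j) (μ j) * P j i := by
      rw [← Finset.sum_sub_distrib]
      exact Finset.sum_congr rfl fun j _ => by simp [hΔdef]; ring
    rw [hsum]
    have h1 := hxeq i
    have h2 := hyeq i
    simp only [hddef]
    linarith
  -- key equality chain
  have hmain : ∑ i ∈ C, (d i + ε i) = ∑ j, Δ j * s j := by
    have h1 : ∑ i ∈ C, (d i + ε i) = ∑ i ∈ C, ∑ j, Δ j * P j i :=
      Finset.sum_congr rfl fun i _ => hdi i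
    rw [h1, Finset.sum_comm]
    exact Finset.sum_congr rfl fun j _ => by rw [hsdef, Finset.mul_sum]
  have hsplit : ∑ j, Δ j * s j = ∑ j ∈ C, Δ j * s j + ∑ j ∈ Cᶜ, Δ j * s j :=
    (Finset.sum_add_sum_compl C _).symm
  have hcompl_nonpos : ∑ j ∈ Cᶜ, Δ j * s j ≤ 0 :=
    Finset.sum_nonpos fun j hj =>
      mul_nonpos_of_nonpos_of_nonneg (hΔ_nonpos j (Finset.mem_compl.mp hj)) (hs_nonneg j)
  have hε_sum : 0 ≤ ∑ i ∈ C, ε i := Finset.sum_nonneg fun i _ => hε i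
  have hterm_nonneg : ∀ j ∈ C, 0 ≤ d j - Δ j * s j := by
    intro j hj
    have : Δ j * s j ≤ Δ j := mul_le_of_le_one_right (hΔ_nonneg j hj) (hs_le j)
    linarith [hΔ_le_d j hj]
  have hkey : ∑ j ∈ C, (d j - Δ j * s j) = 0 := by
    have hle : ∑ j ∈ C, (d j - Δ j * s j) ≤ 0 := by
      have e1 : ∑ j ∈ C, (d j - Δ j * s j)
          = ∑ j ∈ C, d j - ∑ j ∈ C, Δ j * s j := Finset.sum_sub_distrib _ _
      have e2 : ∑ i ∈ C, (d i + ε i) = ∑ i ∈ C, d i + ∑ i ∈ C, ε i :=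
        Finset.sum_add_distrib
      rw [hsplit] at hmain
      linarith
    have hge : 0 ≤ ∑ j ∈ C, (d j - Δ j * s j) := Finset.sum_nonneg hterm_nonneg
    linarith
  have hzero : ∀ j ∈ C, d j = Δ j * s j := by
    intro j hj
    have := (Finset.sum_eq_zero_iff_of_nonneg hterm_nonneg).mp hkey j hj
    linarith
  -- consequences on C
  have hxμ : ∀ j ∈ C, x j ≤ μ j := by
    intro j hj
    by_contra h
    push_neg at h
    have hyx := (hmemC j).mp hj
    have hlt : Δ j < d j := by
      simp only [hΔdef, hddef]
      rcases le_total (y j) (μ j) with h2 | h2 <;>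
        simp [min_eq_left, min_eq_right, h2, le_of_lt h] <;> linarith
    have : Δ j * s j ≤ Δ j := mul_le_of_le_one_right (hΔ_nonneg j hj) (hs_le j)
    have := hzero j hj
    linarith
  have hs_one : ∀ j ∈ C, s j = 1 := by
    intro j hj
    have h1 : Δ j * s j ≤ d j * s j :=
      mul_le_mul_of_nonneg_right (hΔ_le_d j hj) (hs_nonneg j)
    have h2 := hzero j hj
    have h3 := hd_pos j hj
    have h4 : 1 ≤ s j := by nlinarith
    exact le_antisymm (hs_le j) h4
  have hrow_one : ∀ j ∈ C, ∑ l, P j l = 1 := by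
    intro j hj
    refine le_antisymm (hPsub j) ?_
    have : s j ≤ ∑ l, P j l :=
      Finset.sum_le_sum_of_subset_of_nonneg (Finset.subset_univ C)
        (fun i _ _ => hP j i)
    rw [hs_one j hj] at this
    exact this
  have hout : ∀ j ∈ C, ∀ l, l ∉ C → P j l = 0 := by
    intro j hj l hl
    have hsum0 : ∑ l ∈ Cᶜ, P j l = 0 := by
      have h2 := Finset.sum_add_sum_compl C (P j)
      have h3 : ∑ i' ∈ C, P j i' = 1 := hs_one j hj
      rw [hrow_one j hj] at h2
      linarith
    exact (Finset.sum_eq_zero_iff_of_nonneg (fun l _ => hP j l)).mp hsum0 l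
      (Finset.mem_compl.mpr hl)
  have hCclosed : ∀ j ∈ C, ∀ l, 0 < P j l → l ∈ C := by
    intro j hj l hpos
    by_contra hl
    rw [hout j hj l hl] at hpos
    exact lt_irrefl 0 hpos
  -- reach sets
  set R : Fin n → Finset (Fin n) :=
    fun j => Finset.univ.filter (fun l => j = l ∨ ∃ k ≥ 1, 0 < (P ^ k) j l) with hRdef
  have hmemR : ∀ j l, l ∈ R j ↔ (j = l ∨ ∃ k ≥ 1, 0 < (P ^ k) j l) := by
    intro j l; simp [hRdef]
  have hRself : ∀ j, j ∈ R j := fun j => (hmemR j j).mpr (Or.inl rfl)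
  have hRtrans : ∀ j l, l ∈ R j → R l ⊆ R j := by
    intro j l hl m hm
    rw [hmemR] at hl hm ⊢
    rcases hm with rfl | ⟨b, hb, hpb⟩
    · exact hl
    · rcases hl with rfl | ⟨a, ha, hpa⟩
      · exact Or.inr ⟨b, hb, hpb⟩
      · exact Or.inr ⟨a + b, by omega, pow_entry_trans hP hpa hpb⟩
  have hRsubC : ∀ j ∈ C, R j ⊆ C := by
    intro j hj l hl
    rw [hmemR] at hl
    rcases hl with rfl | ⟨k, hk, hp⟩
    · exact hj
    · exact closed_pow hP (T := {i | i ∈ C}) (fun a ha b hb => hCclosed a ha b hb) k j hj l hp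
  obtain ⟨i, hiC, himin⟩ :=
    Finset.exists_min_image C (fun j => (R j).card) ⟨i0, hi0C⟩
  set Cs : Set (Fin n) := {j | Communicates P i j} with hCsdef
  have hclass : IsCommClass P Cs := ⟨i, rfl⟩
  have hiCs : i ∈ Cs := Or.inl rfl
  have hCsReach : ∀ j ∈ Cs, j ∈ R i := by
    intro j hj
    rw [hmemR]
    rcases hj with rfl | ⟨⟨k, hk, hp⟩, _⟩
    · exact Or.inl rfl
    · exact Or.inr ⟨k, hk, hp⟩
  have hCssubC : ∀ j ∈ Cs, j ∈ C := fun j hj => hRsubC i hiC (hCsReach j hj)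
  have hCsclosed : ∀ j ∈ Cs, ∀ l, 0 < P j l → l ∈ Cs := by
    intro j hj l hpos
    have hil : ∃ k ≥ 1, 0 < (P ^ k) i l := by
      rcases hj with rfl | ⟨⟨a, ha, hpa⟩, _⟩
      · exact ⟨1, le_rfl, by rwa [pow_one]⟩
      · refine ⟨a + 1, by omega, ?_⟩
        have : 0 < (P ^ 1) j l := by rwa [pow_one]
        exact pow_entry_trans hP hpa this
    have hlR : l ∈ R i := (hmemR i l).mpr (Or.inr hil)
    have hlC : l ∈ C := hRsubC i hiC hlR
    have hiRl : i ∈ R l := by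
      by_contra hnot
      have hsub : R l ⊆ R i := hRtrans i l hlR
      have hlt : (R l).card < (R i).card :=
        Finset.card_lt_card ((Finset.ssubset_iff_of_subset hsub).mpr
          ⟨i, hRself i, hnot⟩)
      exact absurd (himin l hlC) (not_le.mpr hlt)
    rw [hmemR] at hiRl
    rcases hiRl with rfl | ⟨b, hb, hpb⟩
    · exact Or.inl rfl
    · exact Or.inr ⟨hil, ⟨b, hb, hpb⟩⟩
  -- finset version of Cs
  set DC : Finset (Fin n) := Finset.univ.filter (fun j => j ∈ Cs) with hDCdef
  have hmemDC : ∀ j, j ∈ DC ↔ j ∈ Cs := by intro j; simp [hDCdef]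
  have hmin_nonneg : ∀ j, 0 ≤ min (x j) (μ j) := fun j => le_min (hx j) (hμ j).le
  -- for j ∈ DC, the within-class column sum is 1
  have ht_one : ∀ j ∈ DC, ∑ i' ∈ DC, P j i' = 1 := by
    intro j hj
    have hjCs := (hmemDC j).mp hj
    have hjC := hCssubC j hjCs
    have hzero_out : ∑ i' ∈ DCᶜ, P j i' = 0 := by
      apply Finset.sum_eq_zero
      intro i' hi'
      have hi'n : i' ∉ Cs := fun h => (Finset.mem_compl.mp hi') ((hmemDC i').mpr h)
      by_contra h
      have hpos : 0 < P j i' := lt_of_le_of_ne (hP j i') (Ne.symm h)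
      exact hi'n (hCsclosed j hjCs i' hpos)
    have h2 : ∑ i' ∈ DC, P j i' + ∑ i' ∈ DCᶜ, P j i' = ∑ i', P j i' :=
      Finset.sum_add_sum_compl DC (P j)
    rw [hzero_out, hrow_one j hjC] at h2
    linarith
  -- sum of traffic equations over DC
  have hbalance : ∑ i' ∈ DC, α i' + ∑ j ∈ DCᶜ, min (x j) (μ j) * (∑ i' ∈ DC, P j i') = 0 := by
    have e1 : ∑ i' ∈ DC, x i'
        = ∑ i' ∈ DC, α i' + ∑ j, min (x j) (μ j) * (∑ i' ∈ DC, P j i') := by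
      calc ∑ i' ∈ DC, x i'
          = ∑ i' ∈ DC, (α i' + ∑ j, min (x j) (μ j) * P j i') :=
            Finset.sum_congr rfl fun i' _ => hxeq i'
        _ = ∑ i' ∈ DC, α i' + ∑ i' ∈ DC, ∑ j, min (x j) (μ j) * P j i' :=
            Finset.sum_add_distrib
        _ = ∑ i' ∈ DC, α i' + ∑ j, ∑ i' ∈ DC, min (x j) (μ j) * P j i' := by
            rw [Finset.sum_comm]
        _ = ∑ i' ∈ DC, α i' + ∑ j, min (x j) (μ j) * (∑ i' ∈ DC, P j i') := by
            congr 1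
            exact Finset.sum_congr rfl fun j _ => (Finset.mul_sum _ _ _).symm
    have e2 : ∑ j, min (x j) (μ j) * (∑ i' ∈ DC, P j i')
        = ∑ j ∈ DC, min (x j) (μ j) * (∑ i' ∈ DC, P j i')
          + ∑ j ∈ DCᶜ, min (x j) (μ j) * (∑ i' ∈ DC, P j i') :=
      (Finset.sum_add_sum_compl DC _).symm
    have e3 : ∑ j ∈ DC, min (x j) (μ j) * (∑ i' ∈ DC, P j i') = ∑ j ∈ DC, x j := by
      apply Finset.sum_congr rfl
      intro j hj
      rw [ht_one j hj, mul_one]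
      exact min_eq_left (hxμ j (hCssubC j ((hmemDC j).mp hj)))
    rw [e2, e3] at e1
    linarith
  have hsums_nonneg1 : 0 ≤ ∑ i' ∈ DC, α i' := Finset.sum_nonneg fun i' _ => hα i'
  have hsums_nonneg2 : 0 ≤ ∑ j ∈ DCᶜ, min (x j) (μ j) * (∑ i' ∈ DC, P j i') :=
    Finset.sum_nonneg fun j _ =>
      mul_nonneg (hmin_nonneg j) (Finset.sum_nonneg fun i' _ => hP j i')
  have hα0 : ∀ i' ∈ Cs, α i' = 0 := by
    intro i' hi'
    have h0 : ∑ i' ∈ DC, α i' = 0 := by linarith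
    exact (Finset.sum_eq_zero_iff_of_nonneg (fun i' _ => hα i')).mp h0 i'
      ((hmemDC i').mpr hi')
  have hmin0 : ∀ j, j ∉ Cs → ∀ i' ∈ Cs, min (x j) (μ j) * P j i' = 0 := by
    intro j hj i' hi'
    have h0 : ∑ j ∈ DCᶜ, min (x j) (μ j) * (∑ i' ∈ DC, P j i') = 0 := by linarith
    have hjc : j ∈ DCᶜ := Finset.mem_compl.mpr (fun h => hj ((hmemDC j).mp h))
    have h1 : min (x j) (μ j) * (∑ i' ∈ DC, P j i') = 0 :=
      (Finset.sum_eq_zero_iff_of_nonneg (fun j _ =>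
        mul_nonneg (hmin_nonneg j) (Finset.sum_nonneg fun i' _ => hP j i'))).mp h0 j hjc
    have h2 : ∑ i' ∈ DC, min (x j) (μ j) * P j i' = 0 := by
      rw [← Finset.mul_sum]; exact h1
    exact (Finset.sum_eq_zero_iff_of_nonneg (fun i' _ =>
      mul_nonneg (hmin_nonneg j) (hP j i'))).mp h2 i' ((hmemDC i').mpr hi')
  -- positivity propagation
  have hxlb : ∀ j m, x m ≥ min (x j) (μ j) * P j m := by
    intro j m
    have h1 : min (x j) (μ j) * P j m ≤ ∑ j', min (x j') (μ j') * P j' m :=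
      Finset.single_le_sum (fun j' _ => mul_nonneg (hmin_nonneg j') (hP j' m))
        (Finset.mem_univ j)
    have := hxeq m
    have := hα m
    linarith
  have claimA : ∀ k, ∀ j l : Fin n, j ∉ Cs → l ∈ Cs → 0 < x j → 0 < (P ^ k) j l → False := by
    intro k
    induction k with
    | zero =>
      intro j l hj hl hxj hp
      simp [Matrix.one_apply] at hp
      rcases eq_or_ne j l with rfl | hne
      · exact hj hl
      · rw [if_neg hne] at hp; exact lt_irrefl 0 hp
    | succ k ih =>
      intro j l hj hl hxj hp
      obtain ⟨m, h1, h2⟩ := pow_succ_exists hP hp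
      have hminj : 0 < min (x j) (μ j) := lt_min hxj (hμ j)
      have hxm : 0 < x m := lt_of_lt_of_le (mul_pos hminj h1) (hxlb j m)
      by_cases hm : m ∈ Cs
      · have := hmin0 j hj m hm
        exact absurd this (ne_of_gt (mul_pos hminj h1))
      · exact ih m l hm hl hxm h2
  -- apply NI
  rcases hNI Cs hclass with hfill | hdrain
  · rcases hfill with ⟨i', hi', hαpos⟩ | ⟨j0, hαj0, l, hl, k, hk, hpk⟩
    · rw [hα0 i' hi'] at hαpos; exact lt_irrefl 0 hαpos
    · have hxj0 : 0 < x j0 := by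
        have hsum : 0 ≤ ∑ j, min (x j) (μ j) * P j j0 :=
          Finset.sum_nonneg fun j _ => mul_nonneg (hmin_nonneg j) (hP j j0)
        have := hxeq j0
        linarith
      by_cases hj0 : j0 ∈ Cs
      · rw [hα0 j0 hj0] at hαj0; exact lt_irrefl 0 hαj0
      · exact claimA k j0 l hj0 hl hxj0 hpk
  · rcases hdrain with ⟨i', hi', hrow⟩ | ⟨i', hi', j, hj, hpos⟩
    · have := hrow_one i' (hCssubC i' hi')
      linarith
    · exact hj (hCsclosed i' hi' j hpos)
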